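/- Let λ, μ, c > 0 and let x : [0,∞) → ℝ be differentiable with x'(t) = λ x(t)² − (λc + μ) x(t) + μc for all t ≥ 0. If x(0) ∈ [0, c), then lim_{t→∞} x(t) = min{c, μ/λ}. -/

import Mathlib

open Set Filter

lemma SIS_const_of_deriv_zero (F : ℝ → ℝ) (hF : ∀ t ≥ (0:ℝ), HasDerivAt F 0 t) :
    ∀ t ≥ (0:ℝ), F t = F 0 := by
  intro t ht
  have hcont : ContinuousOn F (Icc 0 t) := fun s hs =>
    (hF s hs.1).continuousAt.continuousWithinAt
  exact constant_of_has_deriv_right_zero hcont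
    (fun s hs => (hF s hs.1).hasDerivWithinAt) t ⟨ht, le_rfl⟩

/-- Solution formula for a scalar linear ODE `v' = q v` on `[0, ∞)`. -/
lemma SIS_linear_ode (q v : ℝ → ℝ) (hq : Continuous q)
    (hv : ∀ t ≥ (0:ℝ), HasDerivAt v (q t * v t) t) :
    ∀ t ≥ (0:ℝ), v t = v 0 * Real.exp (∫ s in (0:ℝ)..t, q s) := by
  set P : ℝ → ℝ := fun t => ∫ s in (0:ℝ)..t, q s with hPdef
  have hPd : ∀ t : ℝ, HasDerivAt P (q t) t := fun t =>
    (hq.integral_hasStrictDerivAt 0 t).hasDerivAt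
  have key : ∀ t ≥ (0:ℝ), v t * Real.exp (-P t) = v 0 := by
    have h0 : ∀ t ≥ (0:ℝ), HasDerivAt (fun t => v t * Real.exp (-P t)) 0 t := by
      intro t ht
      have h1 := (hv t ht).mul ((hPd t).neg.exp)
      refine h1.congr_deriv ?_
      ring
    intro t ht
    have := SIS_const_of_deriv_zero _ h0 t ht
    simpa [hPdef, Real.exp_zero] using this
  intro t ht
  calc v t = v t * Real.exp (-P t) * Real.exp (P t) := by
        rw [mul_assoc, ← Real.exp_add]; simp
    _ = v 0 * Real.exp (P t) := by rw [key t ht]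

/-- Asymptotic-state formula `x(∞) = min {c, μ/λ}` for the mean-field SIS ODE
`x' = λ x² − (λc + μ) x + μc` with initial state in `[0, c)`. -/
theorem stmt_7 (lam mu c : ℝ) (hlam : 0 < lam) (hmu : 0 < mu) (hc : 0 < c)
    (x : ℝ → ℝ)
    (hx : ∀ t ≥ (0 : ℝ),
      HasDerivAt x (lam * x t ^ 2 - (lam * c + mu) * x t + mu * c) t)
    (hx0 : x 0 ∈ Ico (0 : ℝ) c) :
    Tendsto x atTop (nhds (min c (mu / lam))) := by
  obtain ⟨hx00, hx0c⟩ := hx0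
  -- continuous extension of x to the left
  set xt : ℝ → ℝ := fun s => x (max s 0) with hxtdef
  have hxtc : Continuous xt := by
    rw [continuous_iff_continuousAt]
    intro s
    have h2 : ContinuousAt (fun s : ℝ => max s 0) s :=
      (continuous_id.max continuous_const).continuousAt
    exact ContinuousAt.comp ((hx _ (le_max_right s 0)).continuousAt) h2
  have hxte : ∀ s ≥ (0:ℝ), xt s = x s := fun s hs => by
    simp [hxtdef, max_eq_left hs]
  -- the two linear factorizations
  set q1 : ℝ → ℝ := fun s => lam * xt s - mu with hq1def
  set q2 : ℝ → ℝ := fun s => lam * (xt s - c) with hq2def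
  have hq1c : Continuous q1 := (continuous_const.mul hxtc).sub continuous_const
  have hq2c : Continuous q2 := continuous_const.mul (hxtc.sub continuous_const)
  have hv : ∀ t ≥ (0:ℝ), x t - c
      = (x 0 - c) * Real.exp (∫ s in (0:ℝ)..t, q1 s) := by
    have := SIS_linear_ode q1 (fun t => x t - c) hq1c ?_
    · simpa using this
    · intro t ht
      have h1 := (hx t ht).sub_const c
      refine h1.congr_deriv ?_
      rw [hq1def]; simp only [hxte t ht]; ring
  have hu : ∀ t ≥ (0:ℝ), lam * x t - mu
      = (lam * x 0 - mu) * Real.exp (∫ s in (0:ℝ)..t, q2 s) := by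
    have := SIS_linear_ode q2 (fun t => lam * x t - mu) hq2c ?_
    · simpa using this
    · intro t ht
      have h1 := ((hx t ht).const_mul lam).sub_const mu
      refine h1.congr_deriv ?_
      rw [hq2def]; simp only [hxte t ht]; ring
  -- relation between the two integrals
  have hQP : ∀ t : ℝ, (∫ s in (0:ℝ)..t, q1 s)
      = (∫ s in (0:ℝ)..t, q2 s) + (lam * c - mu) * t := by
    intro t
    have h1 : ∀ s ∈ uIcc (0:ℝ) t, q1 s = q2 s + (lam * c - mu) := by
      intro s _
      rw [hq1def, hq2def]; ring
    rw [intervalIntegral.integral_congr h1,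
      intervalIntegral.integral_add (hq2c.intervalIntegrable _ _)
        (intervalIntegrable_const)]
    simp [intervalIntegral.integral_const]
    ring
  -- key algebraic identity
  set E : ℝ → ℝ := fun t => Real.exp ((lam * c - mu) * t) with hEdef
  set P : ℝ → ℝ := fun t => ∫ s in (0:ℝ)..t, q2 s with hPdef
  set D : ℝ → ℝ := fun t => (lam * x 0 - mu) - lam * (x 0 - c) * E t with hDdef
  have hkey : ∀ t ≥ (0:ℝ), Real.exp (P t) * D t = lam * c - mu := by
    intro t ht
    have e1 := hu t ht
    have e2 := hv t ht
    rw [hQP t, Real.exp_add] at e2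
    rw [hDdef]
    simp only [hPdef, hEdef] at *
    linear_combination lam * e2 - e1
  have hEtend0 : lam * c - mu < 0 → Tendsto E atTop (nhds 0) := by
    intro hr
    have h1 : Tendsto (fun t : ℝ => (lam * c - mu) * t) atTop atBot :=
      (tendsto_const_mul_atBot_of_neg hr).mpr tendsto_id
    exact Real.tendsto_exp_atBot.comp h1
  rcases lt_trichotomy (lam * c) mu with hr | hr | hr
  -- Case 1: lam*c < mu, limit is c
  · have hmin : min c (mu / lam) = c :=
      min_eq_left (le_of_lt ((lt_div_iff₀ hlam).mpr (by linarith)))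
    rw [hmin]
    have hrneg : lam * c - mu < 0 := by linarith
    have hu0 : lam * x 0 - mu < 0 := by nlinarith
    have hDne : ∀ t ≥ (0:ℝ), D t ≠ 0 := by
      intro t ht h
      have hk := hkey t ht
      rw [h, mul_zero] at hk
      linarith
    have heq : ∀ᶠ t in atTop,
        x t = c + (x 0 - c) * ((lam * c - mu) / D t) * E t := by
      filter_upwards [eventually_ge_atTop (0:ℝ)] with t ht
      have h2 : x t - c = (x 0 - c) * (Real.exp (P t) * E t) := by
        have h2' := hv t ht
        rw [hQP t, Real.exp_add] at h2'
        exact h2'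
      have h3 : Real.exp (P t) = (lam * c - mu) / D t :=
        (eq_div_iff (hDne t ht)).mpr (hkey t ht)
      rw [h3] at h2
      linarith [h2]
    have hDt : Tendsto D atTop (nhds (lam * x 0 - mu)) := by
      have h1 : Tendsto (fun t => (lam * x 0 - mu) - lam * (x 0 - c) * E t) atTop
          (nhds ((lam * x 0 - mu) - lam * (x 0 - c) * 0)) :=
        tendsto_const_nhds.sub (tendsto_const_nhds.mul (hEtend0 hrneg))
      simpa using h1
    have hlim : Tendsto (fun t => c + (x 0 - c) * ((lam * c - mu) / D t) * E t) atTop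
        (nhds (c + (x 0 - c) * ((lam * c - mu) / (lam * x 0 - mu)) * 0)) :=
      tendsto_const_nhds.add
        ((tendsto_const_nhds.mul (tendsto_const_nhds.div hDt hu0.ne)).mul (hEtend0 hrneg))
    have hval : c + (x 0 - c) * ((lam * c - mu) / (lam * x 0 - mu)) * 0 = c := by ring
    rw [hval] at hlim
    exact hlim.congr' (EventuallyEq.symm heq)
  -- Case 2: lam*c = mu, limit is c
  · have hmin : min c (mu / lam) = c := by
      have : mu / lam = c := by
        field_simp
        linarith
      rw [this, min_self]
    rw [hmin]
    have hvneg : ∀ t ≥ (0:ℝ), x t - c < 0 := by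
      intro t ht
      rw [hv t ht]
      exact mul_neg_of_neg_of_pos (by linarith) (Real.exp_pos _)
    have hW : ∀ t ≥ (0:ℝ),
        HasDerivAt (fun t => (x t - c)⁻¹ + lam * t) 0 t := by
      intro t ht
      have hd : HasDerivAt (fun t => x t - c) (lam * (x t - c) ^ 2) t := by
        refine ((hx t ht).sub_const c).congr_deriv ?_
        have hmc : mu = lam * c := hr.symm
        rw [hmc]; ring
      have hne := (hvneg t ht).ne
      have h2 := hd.inv hne
      have h3 := h2.add ((hasDerivAt_id t).const_mul lam)
      refine h3.congr_deriv ?_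
      field_simp
      ring
    have hw := SIS_const_of_deriv_zero _ hW
    have heq : ∀ᶠ t in atTop, x t = c + ((x 0 - c)⁻¹ - lam * t)⁻¹ := by
      filter_upwards [eventually_ge_atTop (0:ℝ)] with t ht
      have h1 := hw t ht
      simp only [mul_zero, add_zero] at h1
      have h2 : (x t - c)⁻¹ = (x 0 - c)⁻¹ - lam * t := by linarith
      have h3 : x t - c = ((x 0 - c)⁻¹ - lam * t)⁻¹ := by
        rw [← h2, inv_inv]
      linarith
    have h4 : Tendsto (fun t : ℝ => lam * t - (x 0 - c)⁻¹) atTop atTop := by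
      have h5 : Tendsto (fun t : ℝ => lam * t) atTop atTop :=
        (tendsto_const_mul_atTop_of_pos hlam).mpr tendsto_id
      exact tendsto_atTop_add_const_right atTop (-(x 0 - c)⁻¹) h5
    have h6 : Tendsto (fun t : ℝ => ((x 0 - c)⁻¹ - lam * t)⁻¹) atTop (nhds 0) := by
      have h7 := h4.inv_tendsto_atTop.neg
      rw [neg_zero] at h7
      refine h7.congr fun t => ?_
      show -((lam * t - (x 0 - c)⁻¹)⁻¹) = ((x 0 - c)⁻¹ - lam * t)⁻¹
      rw [← inv_neg, neg_sub]
    have hlim : Tendsto (fun t : ℝ => c + ((x 0 - c)⁻¹ - lam * t)⁻¹) atTop (nhds (c + 0)) :=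
      tendsto_const_nhds.add h6
    rw [add_zero] at hlim
    exact hlim.congr' (EventuallyEq.symm heq)
  -- Case 3: mu < lam*c, limit is mu/lam
  · have hmin : min c (mu / lam) = mu / lam :=
      min_eq_right ((div_le_iff₀ hlam).mpr (by linarith))
    rw [hmin]
    have hE : Tendsto E atTop atTop :=
      Real.tendsto_exp_atTop.comp
        ((tendsto_const_mul_atTop_of_pos (by linarith : (0:ℝ) < lam * c - mu)).mpr tendsto_id)
    have hDinf : Tendsto D atTop atTop := by
      have hpos : 0 < lam * (c - x 0) := by nlinarith
      have h1 : Tendsto (fun t => lam * (c - x 0) * E t) atTop atTop :=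
        (tendsto_const_mul_atTop_of_pos hpos).mpr hE
      have h2 := tendsto_atTop_add_const_left atTop (lam * x 0 - mu) h1
      refine h2.congr fun t => ?_
      show lam * x 0 - mu + lam * (c - x 0) * E t = D t
      simp only [hDdef]
      ring
    have hDne : ∀ t ≥ (0:ℝ), D t ≠ 0 := by
      intro t ht h
      have hk := hkey t ht
      rw [h, mul_zero] at hk
      linarith
    have heq : ∀ᶠ t in atTop,
        x t = (lam * x 0 - mu) * ((lam * c - mu) / D t) / lam + mu / lam := by
      filter_upwards [eventually_ge_atTop (0:ℝ)] with t ht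
      have h2 : lam * x t - mu = (lam * x 0 - mu) * Real.exp (P t) := hu t ht
      have h3 : Real.exp (P t) = (lam * c - mu) / D t :=
        (eq_div_iff (hDne t ht)).mpr (hkey t ht)
      rw [h3] at h2
      have h5 : (lam * x 0 - mu) * ((lam * c - mu) / D t) = lam * x t - mu := by
        exact h2.symm
      rw [h5]
      field_simp
      ring
    have hz : Tendsto (fun t => (lam * c - mu) / D t) atTop (nhds 0) :=
      tendsto_const_nhds.div_atTop hDinf
    have hlim : Tendsto
        (fun t => (lam * x 0 - mu) * ((lam * c - mu) / D t) / lam + mu / lam) atTop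
        (nhds ((lam * x 0 - mu) * 0 / lam + mu / lam)) :=
      (((tendsto_const_nhds.mul hz).div_const lam).add tendsto_const_nhds)
    have hval : (lam * x 0 - mu) * 0 / lam + mu / lam = mu / lam := by ring
    rw [hval] at hlim
    exact hlim.congr' (EventuallyEq.symm heq)
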